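/- Let θ ∈ ℝ be irrational. Define bounded operators U and V on ℓ²(ℤ, ℂ) by (Uξ)(n) = ξ(n−1) and (Vξ)(n) = exp(2πinθ)ξ(n). If T is a bounded linear operator on ℓ²(ℤ, ℂ) satisfying TU = UT and TV = VT, then T is a scalar multiple of the identity. -/

import Mathlib

open Complex Real

lemma exp_torus_injective {θ : ℝ} (hθ : Irrational θ) {n k : ℤ} (h : n ≠ k) :
    Complex.exp (2 * π * I * (n : ℂ) * (θ : ℂ)) ≠
      Complex.exp (2 * π * I * (k : ℂ) * (θ : ℂ)) := by
  intro heq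
  have h1 : Complex.exp (2 * π * I * (n : ℂ) * (θ : ℂ) - 2 * π * I * (k : ℂ) * (θ : ℂ)) = 1 := by
    rw [Complex.exp_sub, heq, div_self (Complex.exp_ne_zero _)]
  rw [Complex.exp_eq_one_iff] at h1
  obtain ⟨m, hm⟩ := h1
  have h2 : ((n - k : ℤ) : ℂ) * (θ : ℂ) = (m : ℂ) := by
    have h2πI : (2 * π * I : ℂ) ≠ 0 := by
      simp [Complex.ext_iff, Real.pi_ne_zero]
    have hz : (2 * π * I : ℂ) * (((n - k : ℤ) : ℂ) * (θ : ℂ) - (m : ℂ)) = 0 := by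
      push_cast
      linear_combination hm
    rcases mul_eq_zero.mp hz with h | h
    · exact absurd h h2πI
    · exact sub_eq_zero.mp h
  have h3 : ((n - k : ℤ) : ℝ) * θ = (m : ℝ) := by
    have := congrArg Complex.re h2
    simpa using this
  have hnk : (n - k : ℤ) ≠ 0 := sub_ne_zero.mpr h
  exact (hθ.intCast_mul hnk).ne_int m h3

/-- Irreducibility of the standard representation of the noncommutative torus algebra
`A_θ` on `ℓ²(ℤ)` for irrational `θ`: any bounded operator commuting with the shift
`(Uξ)(n) = ξ(n−1)` and the modulation `(Vξ)(n) = exp(2πinθ)ξ(n)` is a scalar. -/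
theorem commutant_of_torus_representation_is_scalar
    (θ : ℝ) (hθ : Irrational θ)
    (T : lp (fun _ : ℤ => ℂ) 2 →L[ℂ] lp (fun _ : ℤ => ℂ) 2)
    (hTU : ∀ ξ η : lp (fun _ : ℤ => ℂ) 2, (∀ n : ℤ, η n = ξ (n - 1)) →
      ∀ n : ℤ, (T η) n = (T ξ) (n - 1))
    (hTV : ∀ ξ η : lp (fun _ : ℤ => ℂ) 2,
      (∀ n : ℤ, η n = Complex.exp (2 * π * I * (n : ℂ) * (θ : ℂ)) * ξ n) →
      ∀ n : ℤ, (T η) n = Complex.exp (2 * π * I * (n : ℂ) * (θ : ℂ)) * (T ξ) n) :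
    ∃ c : ℂ, ∀ ξ : lp (fun _ : ℤ => ℂ) 2, T ξ = c • ξ := by
  set e : ℤ → lp (fun _ : ℤ => ℂ) 2 := fun k => lp.single 2 k 1 with he
  -- Step 1: T e_k is supported at k
  have hdiag : ∀ (k n : ℤ), n ≠ k → (T (e k)) n = 0 := by
    intro k n hn
    have hη : ∀ n : ℤ, (Complex.exp (2 * π * I * (k : ℂ) * (θ : ℂ)) • e k) n =
        Complex.exp (2 * π * I * (n : ℂ) * (θ : ℂ)) * (e k) n := by
      intro j
      rcases eq_or_ne j k with rfl | hj
      · simp [lp.coeFn_smul, smul_eq_mul]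
      · simp [lp.coeFn_smul, he, lp.single_apply_ne 2 k _ hj, Pi.single_apply, hj]
    have := hTV (e k) _ hη n
    rw [map_smul] at this
    have h2 : Complex.exp (2 * π * I * (k : ℂ) * (θ : ℂ)) * (T (e k)) n =
        Complex.exp (2 * π * I * (n : ℂ) * (θ : ℂ)) * (T (e k)) n := by
      simpa [lp.coeFn_smul, smul_eq_mul] using this
    by_contra h0
    exact exp_torus_injective hθ hn (mul_right_cancel₀ h0 h2).symm
  set c : ℤ → ℂ := fun k => (T (e k)) k with hc
  have hstep : ∀ k : ℤ, c (k + 1) = c k := by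
    intro k
    have hη : ∀ n : ℤ, (e (k + 1)) n = (e k) (n - 1) := by
      intro n
      rcases eq_or_ne n (k + 1) with rfl | hn
      · rw [he]
        simp [lp.single_apply_self, add_sub_cancel_right]
      · rw [he]
        simp only []
        rw [lp.single_apply_ne 2 _ _ hn, lp.single_apply_ne 2 _ _ (show n - 1 ≠ k by omega)]
    have h := hTU (e k) (e (k + 1)) hη (k + 1)
    rw [show (k + 1 - 1 : ℤ) = k from by ring] at h
    exact h
  have hconst : ∀ k : ℤ, c k = c 0 := by
    intro k
    induction k using Int.induction_on with
    | zero => rfl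
    | succ n ih => exact (hstep n).trans ih
    | pred n ih =>
      have h := hstep (-(n : ℤ) - 1)
      rw [show (-(n : ℤ) - 1 + 1) = -(n : ℤ) from by ring] at h
      rw [show (-(n : ℤ) - 1) = -((n : ℤ) + 1) from by ring] at h ⊢
      rw [← h]
      exact ih
  have hTe : ∀ k : ℤ, T (e k) = (c 0) • e k := by
    intro k
    apply lp.ext; funext n
    rcases eq_or_ne n k with rfl | hn
    · have : (T (e n)) n = c 0 := hconst n
      rw [lp.coeFn_smul, Pi.smul_apply, this, he]
      simp [lp.single_apply_self]
    · rw [hdiag k n hn, lp.coeFn_smul, Pi.smul_apply, he]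
      simp [lp.single_apply_ne 2 _ _ hn, Pi.single_apply, hn]
  refine ⟨c 0, fun ξ => ?_⟩
  have h2 : HasSum (fun i : ℤ => lp.single 2 i (ξ i)) ξ :=
    lp.hasSum_single (by norm_num) ξ
  have h1 : HasSum (fun i : ℤ => T (lp.single 2 i (ξ i))) (T ξ) := h2.mapL T
  have h3 : (fun i : ℤ => T (lp.single 2 i (ξ i))) =
      fun i : ℤ => (c 0) • lp.single 2 i (ξ i) := by
    funext i
    have hsi : lp.single 2 i (ξ i) = (ξ i) • e i := by
      rw [he, ← lp.single_smul]
      simp [smul_eq_mul]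
    rw [hsi, map_smul, hTe, smul_comm]
  rw [h3] at h1
  exact h1.unique (h2.const_smul (c 0))
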